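/- (Discrete inf-sup stability from an approximation property.) Let X_H̄ ⊆ X be a subspace and Y_h ⊆ Y a closed subspace, and let δ ∈ (0,1). Assume that for every v ∈ X_H̄, with p_v ∈ Y the unique solution of A p_v q = B v q for all q ∈ Y, there exists q_h ∈ Y_h with ‖p_v − q_h‖_A ≤ δ ‖p_v‖_A. Then the discrete inf-sup stability condition holds with constant c₁ᴮ (1 − δ): for every v ∈ X_H̄, c₁ᴮ (1 − δ) ‖v‖_X ≤ sup_{0 ≠ q_h ∈ Y_h} (B v q_h)/‖q_h‖_A; moreover (1 − δ) ‖p_v‖_A ≤ sup_{0 ≠ q_h ∈ Y_h} (B v q_h)/‖q_h‖_A. -/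

import Mathlib

section aux

variable {Y : Type*} [NormedAddCommGroup Y] [InnerProductSpace ℝ Y]

theorem stmt12_expand (A : Y →L[ℝ] Y →L[ℝ] ℝ) (p q : Y) (hAsym : ∀ p q : Y, A p q = A q p) :
    A (p - q) (p - q) = A p p - 2 * A p q + A q q := by
  simp only [map_sub, ContinuousLinearMap.sub_apply]
  rw [hAsym q p]; ring

theorem stmt12_cs (A : Y →L[ℝ] Y →L[ℝ] ℝ) (hAsym : ∀ p q : Y, A p q = A q p)
    (μ : ℝ) (hμ : 0 < μ) (hAcoer : ∀ q : Y, μ * ‖q‖ ^ 2 ≤ A q q) (p q : Y) :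
    A p q ≤ Real.sqrt (A p p) * Real.sqrt (A q q) := by
  have hnn : ∀ r : Y, (0:ℝ) ≤ A r r := fun r =>
    le_trans (by positivity) (hAcoer r)
  by_cases hq : q = 0
  · simp [hq, Real.sqrt_zero]
  · have hqq : (0:ℝ) < A q q := by
      have := hAcoer q
      have : (0:ℝ) < μ * ‖q‖ ^ 2 := by
        have : ‖q‖ > 0 := norm_pos_iff.mpr hq
        positivity
      linarith [hAcoer q]
    have hkey : (A p q) ^ 2 ≤ A p p * A q q := by
      have h0 := hnn ((A q q) • p - (A p q) • q)
      simp only [map_sub, map_smul, ContinuousLinearMap.sub_apply,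
        ContinuousLinearMap.smul_apply, smul_eq_mul] at h0
      rw [hAsym q p] at h0
      nlinarith [h0, hqq]
    have hp2 : Real.sqrt (A p p) ^ 2 = A p p := Real.sq_sqrt (hnn p)
    have hq2 : Real.sqrt (A q q) ^ 2 = A q q := Real.sq_sqrt (hnn q)
    nlinarith [Real.sqrt_nonneg (A p p), Real.sqrt_nonneg (A q q),
      mul_nonneg (Real.sqrt_nonneg (A p p)) (Real.sqrt_nonneg (A q q))]

end aux

theorem stmt12
    {X Y : Type*} [NormedAddCommGroup X] [InnerProductSpace ℝ X] [CompleteSpace X]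
    [NormedAddCommGroup Y] [InnerProductSpace ℝ Y] [CompleteSpace Y]
    (A : Y →L[ℝ] Y →L[ℝ] ℝ)
    (hAsym : ∀ p q : Y, A p q = A q p)
    (μ : ℝ) (hμ : 0 < μ) (hAcoer : ∀ q : Y, μ * ‖q‖ ^ 2 ≤ A q q)
    (B : X →L[ℝ] Y →L[ℝ] ℝ)
    (c₁B : ℝ) (hc₁B : 0 < c₁B)
    (hBinfsup : ∀ v : X, c₁B * ‖v‖ ≤
      ⨆ q : {q : Y // q ≠ 0}, B v (q : Y) / Real.sqrt (A (q : Y) (q : Y)))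
    (X_Hbar : Submodule ℝ X) (Y_h : Submodule ℝ Y)
    (hYhclosed : IsClosed (Y_h : Set Y))
    (δ : ℝ) (hδ0 : 0 < δ) (hδ1 : δ < 1)
    (happrox : ∀ v ∈ X_Hbar, ∀ p_v : Y, (∀ q : Y, A p_v q = B v q) →
      ∃ q_h ∈ Y_h, Real.sqrt (A (p_v - q_h) (p_v - q_h)) ≤
        δ * Real.sqrt (A p_v p_v)) :
    ∀ v ∈ X_Hbar,
      c₁B * (1 - δ) * ‖v‖ ≤
        (⨆ q : {q : Y // q ∈ Y_h ∧ q ≠ 0},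
          B v (q : Y) / Real.sqrt (A (q : Y) (q : Y))) ∧
      ∀ p_v : Y, (∀ q : Y, A p_v q = B v q) →
        (1 - δ) * Real.sqrt (A p_v p_v) ≤
          ⨆ q : {q : Y // q ∈ Y_h ∧ q ≠ 0},
            B v (q : Y) / Real.sqrt (A (q : Y) (q : Y)) := by
  intro v hv
  have hnn : ∀ r : Y, (0:ℝ) ≤ A r r := fun r => le_trans (by positivity) (hAcoer r)
  have hpos : ∀ r : Y, r ≠ 0 → (0:ℝ) < A r r := by
    intro r hr
    have : (0:ℝ) < μ * ‖r‖ ^ 2 := by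
      have : ‖r‖ > 0 := norm_pos_iff.mpr hr
      positivity
    linarith [hAcoer r]
  -- existence of p_v by Lax-Milgram
  have hcoer : IsCoercive A := ⟨μ, hμ, fun u => by
    have := hAcoer u; nlinarith [this]⟩
  set e := hcoer.continuousLinearEquivOfBilin with he
  set f := (InnerProductSpace.toDual ℝ Y).symm (B v) with hf
  set p : Y := e.symm f with hpdef
  have hp : ∀ q : Y, A p q = B v q := by
    intro q
    have h1 : (inner ℝ (e p) q : ℝ) = A p q :=
      hcoer.continuousLinearEquivOfBilin_apply p q
    have h2 : e p = f := e.apply_symm_apply f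
    have h3 : (inner ℝ f q : ℝ) = B v q := InnerProductSpace.toDual_symm_apply
    rw [← h1, h2, h3]
  -- key estimate for any Riesz lift
  have key : ∀ p_v : Y, (∀ q : Y, A p_v q = B v q) →
      (1 - δ) * Real.sqrt (A p_v p_v) ≤
        ⨆ q : {q : Y // q ∈ Y_h ∧ q ≠ 0},
          B v (q : Y) / Real.sqrt (A (q : Y) (q : Y)) := by
    intro pv hpv
    by_cases hp0 : pv = 0
    · have hall : ∀ q : {q : Y // q ∈ Y_h ∧ q ≠ 0},
          B v (q : Y) / Real.sqrt (A (q : Y) (q : Y)) = 0 := by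
        intro q
        rw [← hpv q, hp0]; simp
      have : (⨆ q : {q : Y // q ∈ Y_h ∧ q ≠ 0},
          B v (q : Y) / Real.sqrt (A (q : Y) (q : Y))) = 0 := by
        rcases isEmpty_or_nonempty {q : Y // q ∈ Y_h ∧ q ≠ 0} with h | h
        · exact Real.iSup_of_isEmpty _
        · simp only [hall]; exact ciSup_const
      rw [this, hp0]; simp
    · obtain ⟨q_h, hqhmem, hqhA⟩ := happrox v hv pv hpv
      have hNp : (0:ℝ) < Real.sqrt (A pv pv) := Real.sqrt_pos.mpr (hpos pv hp0)
      have hqh0 : q_h ≠ 0 := by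
        intro h
        rw [h, sub_zero] at hqhA
        nlinarith [hqhA, hNp]
      have hNq : (0:ℝ) < Real.sqrt (A q_h q_h) := Real.sqrt_pos.mpr (hpos q_h hqh0)
      -- squared approximation bound
      have hsq : A (pv - q_h) (pv - q_h) ≤ δ^2 * A pv pv := by
        have h2 : Real.sqrt (A (pv - q_h) (pv - q_h)) ^ 2 ≤
            (δ * Real.sqrt (A pv pv)) ^ 2 := by
          apply sq_le_sq' _ hqhA
          have := Real.sqrt_nonneg (A (pv - q_h) (pv - q_h))
          nlinarith [mul_nonneg (le_of_lt hδ0) (le_of_lt hNp)]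
        rw [Real.sq_sqrt (hnn _)] at h2
        nlinarith [h2, Real.sq_sqrt (hnn pv)]
      have hexp := stmt12_expand A pv q_h hAsym
      -- main pointwise estimate
      have hmain : (1 - δ) * Real.sqrt (A pv pv) ≤
          A pv q_h / Real.sqrt (A q_h q_h) := by
        rw [le_div_iff₀ hNq]
        have hp2 : Real.sqrt (A pv pv) ^ 2 = A pv pv := Real.sq_sqrt (hnn pv)
        have hq2 : Real.sqrt (A q_h q_h) ^ 2 = A q_h q_h := Real.sq_sqrt (hnn q_h)
        nlinarith [hsq, hexp, hp2, hq2, sq_nonneg (Real.sqrt (A pv pv) - Real.sqrt (A q_h q_h)),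
          mul_pos hNp hNq, sq_nonneg (Real.sqrt (A pv pv)), sq_nonneg (Real.sqrt (A q_h q_h)),
          mul_pos (mul_pos hδ0 hNp) hNp, mul_pos (mul_pos hδ0 hNq) hNq]
      -- bounded above
      have hbdd : BddAbove (Set.range fun q : {q : Y // q ∈ Y_h ∧ q ≠ 0} =>
          B v (q : Y) / Real.sqrt (A (q : Y) (q : Y))) := by
        refine ⟨Real.sqrt (A pv pv), ?_⟩
        rintro x ⟨q, rfl⟩
        have hq := hpos q q.2.2
        have hNq' : (0:ℝ) < Real.sqrt (A (q:Y) (q:Y)) := Real.sqrt_pos.mpr hq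
        simp only [← hpv]
        rw [div_le_iff₀ hNq']
        exact stmt12_cs A hAsym μ hμ hAcoer pv q
      have hle := le_ciSup hbdd (⟨q_h, hqhmem, hqh0⟩ : {q : Y // q ∈ Y_h ∧ q ≠ 0})
      calc (1 - δ) * Real.sqrt (A pv pv) ≤ A pv q_h / Real.sqrt (A q_h q_h) := hmain
        _ = B v q_h / Real.sqrt (A q_h q_h) := by rw [hpv]
        _ ≤ _ := hle
  refine ⟨?_, key⟩
  -- first part: c₁B ‖v‖ ≤ ‖p‖_A
  have hc : c₁B * ‖v‖ ≤ Real.sqrt (A p p) := by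
    refine le_trans (hBinfsup v) ?_
    rcases isEmpty_or_nonempty {q : Y // q ≠ 0} with h | h
    · rw [Real.iSup_of_isEmpty]; exact Real.sqrt_nonneg _
    · apply ciSup_le
      intro q
      have hq := hpos q q.2
      have hNq' : (0:ℝ) < Real.sqrt (A (q:Y) (q:Y)) := Real.sqrt_pos.mpr hq
      simp only [← hp]
      rw [div_le_iff₀ hNq']
      exact stmt12_cs A hAsym μ hμ hAcoer p q
  calc c₁B * (1 - δ) * ‖v‖ = (1 - δ) * (c₁B * ‖v‖) := by ring
    _ ≤ (1 - δ) * Real.sqrt (A p p) := by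
        apply mul_le_mul_of_nonneg_left hc; linarith
    _ ≤ _ := key p hp
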